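/- With pBWT arrays a_k, d_k at column k, let s_k[1..r] be the sorted list of distinct values in d_k and t_k[j] the multiplicity of s_k[j] in d_k. Then for every j ∈ [1,r], |R[s_k[j]-1, k]| = t_k[j] + t_k[j+1] + ... + t_k[r]. -/

import Mathlib

/-- The number of distinct substrings `R_i[j..k]` among the strings `R_1, …, R_m`. -/
def segCard {α : Type*} [DecidableEq α] {m : ℕ} (R : Fin m → ℕ → α) (j k : ℕ) : ℕ :=
  (Finset.univ.image (fun i : Fin m => fun x : Fin (k + 1 - j) => R i (j + x))).card

/-- The reversed prefix `R_i[k] R_i[k-1] ⋯ R_i[1]` as a list. -/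
def revPrefix {α : Type*} {m : ℕ} (R : Fin m → ℕ → α) (i : Fin m) (k : ℕ) : List α :=
  (List.range k).map (fun x => R i (k - x))

/-- `a` is a pBWT ordering permutation at column `k`: it sorts the reversed
prefixes lexicographically. -/
def SortsRevPrefixes {α : Type*} [LinearOrder α] {m : ℕ} (R : Fin m → ℕ → α)
    (a : Equiv.Perm (Fin m)) (k : ℕ) : Prop :=
  ∀ i j : Fin m, i ≤ j → revPrefix R (a i) k ≤ revPrefix R (a j) k

/-- `d` is the pBWT divergence array at column `k` for the ordering `a`:
`d i` is the starting position of the longest common suffix of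
`R_{a i}[1..k]` and `R_{a (i-1)}[1..k]`, with `d i = k + 1` when this suffix
is empty or `i` is the first index. -/
def IsDArray {α : Type*} {m : ℕ} (R : Fin m → ℕ → α) (a : Equiv.Perm (Fin m))
    (k : ℕ) (d : Fin m → ℕ) : Prop :=
  ∀ i : Fin m,
    (((i : ℕ) = 0) → d i = k + 1) ∧
    (((i : ℕ) ≠ 0) →
      1 ≤ d i ∧ d i ≤ k + 1 ∧
      (∀ x, d i ≤ x → x ≤ k →
        R (a i) x = R (a ⟨(i : ℕ) - 1, lt_of_le_of_lt (Nat.sub_le _ _) i.isLt⟩) x) ∧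
      (1 < d i →
        R (a i) (d i - 1) ≠ R (a ⟨(i : ℕ) - 1, lt_of_le_of_lt (Nat.sub_le _ _) i.isLt⟩) (d i - 1)))

/-! ### Auxiliary lemmas -/

theorem pbwt_take_lex {α : Type*} [LinearOrder α] {l l' : List α}
    (h : List.Lex (· < ·) l l') :
    ∀ t : ℕ, l.take t < l'.take t ∨ l.take t = l'.take t := by
  induction h with
  | nil =>
    intro t
    cases t with
    | zero => right; rfl
    | succ t => left; exact List.Lex.nil
  | @cons a l l' h ih =>
    intro t
    cases t with
    | zero => right; rfl
    | succ t =>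
      rcases ih t with h' | h'
      · left; exact List.Lex.cons h'
      · right; simp [List.take_succ_cons, h']
  | @rel a l b l' hab =>
    intro t
    cases t with
    | zero => right; rfl
    | succ t => left; exact List.Lex.rel hab

theorem pbwt_take_le {α : Type*} [LinearOrder α] {l l' : List α} (h : l ≤ l') (t : ℕ) :
    l.take t ≤ l'.take t := by
  rcases lt_or_eq_of_le h with h | h
  · rcases pbwt_take_lex h t with h' | h'
    · exact le_of_lt h'
    · exact le_of_eq h'
  · subst h; exact le_rfl

theorem pbwt_sandwich {α : Type*} [LinearOrder α] {l1 l2 l3 : List α}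
    (h12 : l1 ≤ l2) (h23 : l2 ≤ l3) (t : ℕ) (h : l1.take t = l3.take t) :
    l2.take t = l1.take t :=
  le_antisymm (le_trans (pbwt_take_le h23 t) (le_of_eq h.symm)) (pbwt_take_le h12 t)

/-- The segment `R_i[p..k]` as a function. -/
def pbwtSeg {α : Type*} {m : ℕ} (R : Fin m → ℕ → α) (p k : ℕ) (i : Fin m) :
    Fin (k + 1 - p) → α :=
  fun x => R i (p + x)

theorem pbwtSeg_eq_iff {α : Type*} {m : ℕ} (R : Fin m → ℕ → α) {p k : ℕ} (hp : 1 ≤ p)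
    (i i' : Fin m) :
    pbwtSeg R p k i = pbwtSeg R p k i' ↔ ∀ y, p ≤ y → y ≤ k → R i y = R i' y := by
  constructor
  · intro h y hy1 hy2
    have hx : y - p < k + 1 - p := by omega
    have h2 := congrFun h ⟨y - p, hx⟩
    simpa [pbwtSeg, Nat.add_sub_cancel' hy1] using h2
  · intro h
    funext x
    exact h (p + x) (Nat.le_add_right _ _) (by omega)

theorem pbwt_take_eq_iff {α : Type*} {m : ℕ} (R : Fin m → ℕ → α) {p k : ℕ}
    (hp1 : 1 ≤ p) (hpk : p ≤ k) (i i' : Fin m) :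
    (revPrefix R i k).take (k + 1 - p) = (revPrefix R i' k).take (k + 1 - p) ↔
      ∀ y, p ≤ y → y ≤ k → R i y = R i' y := by
  unfold revPrefix
  rw [← List.map_take, ← List.map_take, List.take_range]
  have hmin : (k + 1 - p) ⊓ k = k + 1 - p := by omega
  rw [hmin, List.map_eq_map_iff]
  simp only [List.mem_range]
  constructor
  · intro h y hy1 hy2
    have h2 := h (k - y) (by omega)
    rwa [Nat.sub_sub_self hy2] at h2
  · intro h x hx
    exact h (k - x) (by omega) (by omega)

theorem stmt4 {α : Type*} [LinearOrder α] (m n : ℕ) (R : Fin m → ℕ → α)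
    (k : ℕ) (hk1 : 1 ≤ k) (hk2 : k ≤ n)
    (a : Equiv.Perm (Fin m)) (d : Fin m → ℕ)
    (ha : SortsRevPrefixes R a k) (hd : IsDArray R a k d)
    (r : ℕ) (s : Fin r → ℕ) (hs : StrictMono s)
    (hsurj : ∀ i : Fin m, ∃ j : Fin r, d i = s j)
    (hmem : ∀ j : Fin r, ∃ i : Fin m, d i = s j)
    (j : Fin r) (hsj : 2 ≤ s j) :
    segCard R (s j - 1) k =
      ∑ j' ∈ Finset.univ.filter (fun j' : Fin r => j ≤ j'),
        (Finset.univ.filter (fun i : Fin m => d i = s j')).card := by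
  classical
  set p := s j - 1 with hp
  have hsk1 : s j ≤ k + 1 := by
    obtain ⟨i, hi⟩ := hmem j
    by_cases h0 : (i : ℕ) = 0
    · rw [← hi, (hd i).1 h0]
    · rw [← hi]; exact ((hd i).2 h0).2.1
  have hp1 : 1 ≤ p := by omega
  have hpk : p ≤ k := by omega
  set g : Fin m → (Fin (k + 1 - p) → α) := fun i => pbwtSeg R p k (a i) with hg
  -- sandwich for g
  have hsand : ∀ i1 i2 i3 : Fin m, i1 ≤ i2 → i2 ≤ i3 → g i1 = g i3 → g i2 = g i1 := by
    intro i1 i2 i3 h12 h23 h13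
    rw [hg] at h13 ⊢
    simp only at h13 ⊢
    rw [pbwtSeg_eq_iff R hp1] at h13 ⊢
    rw [← pbwt_take_eq_iff R hp1 hpk] at h13 ⊢
    exact pbwt_sandwich (ha _ _ h12) (ha _ _ h23) (k + 1 - p) h13
  -- adjacent rows with small d agree on the segment
  have hA : ∀ i : Fin m, (i : ℕ) ≠ 0 → d i < s j →
      g i = g ⟨(i : ℕ) - 1, lt_of_le_of_lt (Nat.sub_le _ _) i.isLt⟩ := by
    intro i hi hdi
    rw [hg]; simp only
    rw [pbwtSeg_eq_iff R hp1]
    intro y hy1 hy2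
    exact ((hd i).2 hi).2.2.1 y (by omega) hy2
  -- adjacent rows with large d disagree on the segment
  have hB : ∀ i : Fin m, (i : ℕ) ≠ 0 → s j ≤ d i →
      g i ≠ g ⟨(i : ℕ) - 1, lt_of_le_of_lt (Nat.sub_le _ _) i.isLt⟩ := by
    intro i hi hdi h
    rw [hg] at h; simp only at h
    rw [pbwtSeg_eq_iff R hp1] at h
    have hdk : d i ≤ k + 1 := ((hd i).2 hi).2.1
    exact ((hd i).2 hi).2.2.2 (by omega) (h (d i - 1) (by omega) (by omega))
  -- every segment equals the segment of some index with large d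
  have hsurj2 : ∀ N : ℕ, ∀ i : Fin m, (i : ℕ) ≤ N →
      ∃ i' : Fin m, s j ≤ d i' ∧ g i' = g i := by
    intro N
    induction N with
    | zero =>
      intro i hi
      refine ⟨i, ?_, rfl⟩
      rw [(hd i).1 (Nat.le_zero.mp hi)]; omega
    | succ N ih =>
      intro i hi
      by_cases h0 : (i : ℕ) = 0
      · exact ⟨i, by rw [(hd i).1 h0]; omega, rfl⟩
      by_cases hdi : s j ≤ d i
      · exact ⟨i, hdi, rfl⟩
      push_neg at hdi
      obtain ⟨i', h1, h2⟩ :=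
        ih ⟨(i : ℕ) - 1, lt_of_le_of_lt (Nat.sub_le _ _) i.isLt⟩ (by simp; omega)
      exact ⟨i', h1, h2.trans (hA i h0 hdi).symm⟩
  -- segments of two distinct indices with large d differ
  have hinj : ∀ i1 i2 : Fin m, i1 < i2 → s j ≤ d i2 → g i1 ≠ g i2 := by
    intro i1 i2 hlt hd2 hgg
    have hlt' : (i1 : ℕ) < (i2 : ℕ) := hlt
    have hne : (i2 : ℕ) ≠ 0 := by omega
    set i2' : Fin m := ⟨(i2 : ℕ) - 1, lt_of_le_of_lt (Nat.sub_le _ _) i2.isLt⟩ with hi2'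
    have h1 : i1 ≤ i2' := by
      rw [Fin.le_def]; simp only [hi2']; omega
    have h2 : i2' ≤ i2 := by
      rw [Fin.le_def]; simp only [hi2']; omega
    have hmid := hsand i1 i2' i2 h1 h2 hgg
    exact hB i2 hne hd2 (hmid.trans hgg).symm
  -- the image of the segments is the image of g
  have himg : (Finset.univ.image (fun i : Fin m => fun x : Fin (k + 1 - p) => R i (p + x)))
      = Finset.univ.image g := by
    ext v
    simp only [Finset.mem_image, Finset.mem_univ, true_and]
    constructor
    · rintro ⟨i, rfl⟩
      refine ⟨a.symm i, ?_⟩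
      rw [hg]; simp only [Equiv.apply_symm_apply]; rfl
    · rintro ⟨i, rfl⟩
      exact ⟨a i, rfl⟩
  -- card of image equals card of indices with large d
  have hcard : (Finset.univ.image g).card
      = (Finset.univ.filter (fun i : Fin m => s j ≤ d i)).card := by
    symm
    apply Finset.card_bij (fun i _ => g i)
    · intro i hi
      exact Finset.mem_image_of_mem g (Finset.mem_univ i)
    · intro i1 h1 i2 h2 hgg
      simp only [Finset.mem_filter, Finset.mem_univ, true_and] at h1 h2
      by_contra hne
      rcases lt_or_gt_of_ne hne with hlt | hlt
      · exact hinj i1 i2 hlt h2 hgg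
      · exact hinj i2 i1 hlt h1 hgg.symm
    · intro v hv
      obtain ⟨i, _, rfl⟩ := Finset.mem_image.mp hv
      obtain ⟨i', h1, h2⟩ := hsurj2 (i : ℕ) i le_rfl
      exact ⟨i', Finset.mem_filter.mpr ⟨Finset.mem_univ _, h1⟩, h2⟩
  -- the RHS sum equals card of indices with large d
  have hRHS : ∑ j' ∈ Finset.univ.filter (fun j' : Fin r => j ≤ j'),
      (Finset.univ.filter (fun i : Fin m => d i = s j')).card
      = (Finset.univ.filter (fun i : Fin m => s j ≤ d i)).card := by
    rw [Finset.card_eq_sum_card_fiberwise (f := fun i : Fin m => (hsurj i).choose)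
      (t := Finset.univ.filter (fun j' : Fin r => j ≤ j'))
      (fun i hi => by
        simp only [Finset.mem_coe, Finset.mem_filter, Finset.mem_univ, true_and] at hi ⊢
        by_contra hlt
        push_neg at hlt
        have := hs hlt
        have hch := (hsurj i).choose_spec
        omega)]
    apply Finset.sum_congr rfl
    intro j' hj'
    congr 1
    ext i
    simp only [Finset.mem_filter, Finset.mem_univ, true_and]
    have hch : d i = s (hsurj i).choose := (hsurj i).choose_spec
    constructor
    · intro hij'
      have hcj : (hsurj i).choose = j' := hs.injective (by rw [← hch, hij'])
      have hjj' : j ≤ j' := (Finset.mem_filter.mp hj').2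
      refine ⟨?_, hcj⟩
      rw [hij']
      exact hs.monotone hjj'
    · rintro ⟨hge, h⟩
      rw [← h]; exact hch
  rw [hRHS]
  unfold segCard
  rw [himg, hcard]
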